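/- The minimum cost over all specialization functions with parameters n, k equals the minimum cost over all normalized specialization functions: min over φ ∈ Φ_n^k of cost(φ) equals min over X ⊆ [1,n-1] with |X| = k-1 of cost(φ_X^n). -/
import Mathlib


/-- The normalized specialization function `φ_X^n`. -/
noncomputable def normSpec (n : ℕ) (X : Finset ℕ) (i : ℕ) : ℕ :=
  sInf {x : ℕ | x ∈ insert n X ∧ i ≤ x}

/-- Cost of a specialization function. -/
def cost (n : ℕ) (s f φ : ℕ → ℕ) : ℕ :=
  ∑ i ∈ Finset.Icc 1 n, s (φ i) * f i

/-- `φ` is a specialization function with parameters `n`, `k` and range set `Y`. -/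
def IsSpecFun (n k : ℕ) (φ : ℕ → ℕ) (Y : Finset ℕ) : Prop :=
  Y ⊆ Finset.Icc 1 n ∧ Y.card = k ∧
  (∀ i ∈ Finset.Icc 1 n, φ i ∈ Y) ∧
  (∀ x ∈ Y, ∃ i ∈ Finset.Icc 1 n, φ i = x) ∧
  (∀ i ∈ Finset.Icc 1 n, i ≤ φ i)

lemma normSpec_spec (n : ℕ) (X : Finset ℕ) (i : ℕ) (hi : i ≤ n) :
    normSpec n X i ∈ insert n X ∧ i ≤ normSpec n X i := by
  have h : {x : ℕ | x ∈ insert n X ∧ i ≤ x}.Nonempty :=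
    ⟨n, Finset.mem_insert_self n X, hi⟩
  exact Nat.sInf_mem h

lemma normSpec_le (n : ℕ) (X : Finset ℕ) {i y : ℕ} (hy : y ∈ insert n X) (hiy : i ≤ y) :
    normSpec n X i ≤ y := Nat.sInf_le ⟨hy, hiy⟩

lemma normSpec_fixed (n : ℕ) (X : Finset ℕ) {x : ℕ} (hx : x ∈ insert n X) (hxn : x ≤ n) :
    normSpec n X x = x :=
  le_antisymm (normSpec_le n X hx le_rfl) ((normSpec_spec n X x hxn).2)

/-- The minimum cost over all specialization functions with parameters `n`, `k`
equals the minimum cost over all normalized specialization functions `φ_X^n`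
with `X ⊆ [1, n-1]` and `|X| = k - 1`. -/
theorem min_cost_eq_min_normSpec_cost (n k : ℕ) (hn : 1 ≤ n)
    (hk1 : 1 ≤ k) (hkn : k ≤ n) (s f : ℕ → ℕ)
    (hs : ∀ i ∈ Finset.Icc 1 n, ∀ j ∈ Finset.Icc 1 n, i ≤ j → s i ≤ s j) :
    sInf {c : ℕ | ∃ (φ : ℕ → ℕ) (Y : Finset ℕ),
        IsSpecFun n k φ Y ∧ cost n s f φ = c} =
    sInf {c : ℕ | ∃ X : Finset ℕ, X ⊆ Finset.Icc 1 (n - 1) ∧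
        X.card = k - 1 ∧ cost n s f (normSpec n X) = c} := by
  set A := {c : ℕ | ∃ (φ : ℕ → ℕ) (Y : Finset ℕ),
      IsSpecFun n k φ Y ∧ cost n s f φ = c} with hA
  set B := {c : ℕ | ∃ X : Finset ℕ, X ⊆ Finset.Icc 1 (n - 1) ∧
      X.card = k - 1 ∧ cost n s f (normSpec n X) = c} with hB
  have hXsub : ∀ X : Finset ℕ, X ⊆ Finset.Icc 1 (n - 1) →
      (insert n X : Finset ℕ) ⊆ Finset.Icc 1 n := by
    intro X hX
    apply Finset.insert_subset (Finset.mem_Icc.mpr ⟨hn, le_rfl⟩)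
    exact hX.trans (Finset.Icc_subset_Icc_right (Nat.sub_le n 1))
  -- B ⊆ A
  have hBA : B ⊆ A := by
    intro c hc
    obtain ⟨X, hX, hcard, hcost⟩ := hc
    refine ⟨normSpec n X, insert n X, ⟨hXsub X hX, ?_, ?_, ?_, ?_⟩, hcost⟩
    · have hnX : n ∉ X := by
        intro h
        have := Finset.mem_Icc.mp (hX h)
        omega
      rw [Finset.card_insert_of_notMem hnX, hcard]
      omega
    · intro i hi
      exact (normSpec_spec n X i (Finset.mem_Icc.mp hi).2).1
    · intro x hx
      have hx' := Finset.mem_Icc.mp (hXsub X hX hx)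
      exact ⟨x, Finset.mem_Icc.mpr hx', normSpec_fixed n X hx hx'.2⟩
    · intro i hi
      exact (normSpec_spec n X i (Finset.mem_Icc.mp hi).2).2
  -- every element of A dominates some element of B
  have hAB : ∀ c ∈ A, ∃ b ∈ B, b ≤ c := by
    intro c hc
    obtain ⟨φ, Y, ⟨hYsub, hYcard, hmem, hsurj, hle⟩, hcost⟩ := hc
    have hnIcc : n ∈ Finset.Icc 1 n := Finset.mem_Icc.mpr ⟨hn, le_rfl⟩
    have hφn : φ n = n := by
      have h1 := hmem n hnIcc
      have h2 := (Finset.mem_Icc.mp (hYsub h1)).2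
      exact le_antisymm h2 (hle n hnIcc)
    have hnY : n ∈ Y := hφn ▸ hmem n hnIcc
    set X := Y.erase n with hXdef
    have hins : insert n X = Y := Finset.insert_erase hnY
    refine ⟨cost n s f (normSpec n X), ⟨X, ?_, ?_, rfl⟩, ?_⟩
    · intro y hy
      have hy1 := Finset.mem_Icc.mp (hYsub (Finset.mem_of_mem_erase hy))
      have hyn : y ≠ n := Finset.ne_of_mem_erase hy
      exact Finset.mem_Icc.mpr ⟨hy1.1, by omega⟩
    · rw [Finset.card_erase_of_mem hnY, hYcard]
    · rw [← hcost]
      apply Finset.sum_le_sum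
      intro i hi
      have hφi : φ i ∈ insert n X := hins ▸ hmem i hi
      have h1 : normSpec n X i ≤ φ i := normSpec_le n X hφi (hle i hi)
      have h2 : normSpec n X i ∈ Finset.Icc 1 n :=
        hXsub X (fun y hy => by
          have hy1 := Finset.mem_Icc.mp (hYsub (Finset.mem_of_mem_erase hy))
          have hyn : y ≠ n := Finset.ne_of_mem_erase hy
          exact Finset.mem_Icc.mpr ⟨hy1.1, by omega⟩)
          (normSpec_spec n X i (Finset.mem_Icc.mp hi).2).1
      have h3 : φ i ∈ Finset.Icc 1 n := hYsub (hmem i hi)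
      exact Nat.mul_le_mul_right (f i) (hs _ h2 _ h3 h1)
  -- nonemptiness of B
  have hBne : B.Nonempty := by
    refine ⟨cost n s f (normSpec n (Finset.Icc 1 (k - 1))), Finset.Icc 1 (k - 1),
      Finset.Icc_subset_Icc_right (by omega), ?_, rfl⟩
    rw [Nat.card_Icc]; omega
  have hAne : A.Nonempty := hBne.mono hBA
  apply le_antisymm
  · exact Nat.sInf_le (hBA (Nat.sInf_mem hBne))
  · obtain ⟨b, hb, hble⟩ := hAB _ (Nat.sInf_mem hAne)
    exact le_trans (Nat.sInf_le hb) hble
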